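/- Let q be a prime power, let k ≥ 3, and set η = q^{−(k−2)/4}. Then the inner-product map IP : 𝔽_q^k × 𝔽_q^k → 𝔽_q, IP(x,y) = Σ_{i=1}^{k} x_i y_i, is a (q^k, q, η)-expander coloring; that is, for all sets X, Y ⊆ 𝔽_q^k with |X|, |Y| ≥ η·q^k and every v ∈ 𝔽_q, one has |{(x,y) ∈ X×Y : ⟨x,y⟩ = v}| = (|X||Y|/q)(1±η). -/

import Mathlib

open Finset

/-- `a = b(1 ± η)`, i.e. `b(1-η) ≤ a ≤ b(1+η)`. -/
def Approx (a b η : ℝ) : Prop := b * (1 - η) ≤ a ∧ a ≤ b * (1 + η)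

section Aux

variable {F : Type} [Field F] [Fintype F] [DecidableEq F] {k : ℕ}

/-- fibers of a nonzero linear functional are equinumerous -/
lemma fiber_card_eq (z : Fin k → F) (hz : z ≠ 0) (c : F) :
    (univ.filter fun y : Fin k → F => ∑ i, z i * y i = c).card
      = (univ.filter fun y : Fin k → F => ∑ i, z i * y i = 0).card := by
  obtain ⟨i₀, hi₀⟩ : ∃ i, z i ≠ 0 := by
    by_contra h; push_neg at h; exact hz (funext h)
  set w : Fin k → F := Pi.single i₀ ((z i₀)⁻¹ * c) with hw
  have hwsum : ∑ i, z i * w i = c := by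
    rw [hw]
    rw [Finset.sum_eq_single i₀]
    · rw [Pi.single_eq_same, ← mul_assoc, mul_inv_cancel₀ hi₀, one_mul]
    · intro b _ hb; rw [Pi.single_eq_of_ne hb, mul_zero]
    · intro h; exact absurd (mem_univ i₀) h
  apply Finset.card_nbij' (fun y => y - w) (fun y => y + w)
  · intro y hy
    simp only [mem_coe, mem_filter, mem_univ, true_and] at hy ⊢
    have : ∑ i, z i * (y - w) i = (∑ i, z i * y i) - ∑ i, z i * w i := by
      rw [← Finset.sum_sub_distrib]; congr 1; ext i; simp [mul_sub]
    rw [this, hy, hwsum, sub_self]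
  · intro y hy
    simp only [mem_coe, mem_filter, mem_univ, true_and] at hy ⊢
    have : ∑ i, z i * (y + w) i = (∑ i, z i * y i) + ∑ i, z i * w i := by
      rw [← Finset.sum_add_distrib]; congr 1; ext i; simp [mul_add]
    rw [this, hy, hwsum, zero_add]
  · intro y _; simp
  · intro y _; simp

lemma fiber_card (hk : 1 ≤ k) (z : Fin k → F) (hz : z ≠ 0) (c : F) :
    (univ.filter fun y : Fin k → F => ∑ i, z i * y i = c).card
      = Fintype.card F ^ (k - 1) := by
  have hq : 0 < Fintype.card F := Fintype.card_pos
  have htot : (Fintype.card F) ^ k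
      = ∑ b : F, (univ.filter fun y : Fin k → F => ∑ i, z i * y i = b).card := by
    have := Finset.card_eq_sum_card_fiberwise
      (f := fun y : Fin k → F => ∑ i, z i * y i) (s := univ) (t := univ)
      (fun x _ => mem_univ _)
    simpa [Fintype.card_pi] using this
  have hconst : ∀ b : F, (univ.filter fun y : Fin k → F => ∑ i, z i * y i = b).card
      = (univ.filter fun y : Fin k → F => ∑ i, z i * y i = 0).card :=
    fun b => fiber_card_eq z hz b
  rw [Finset.sum_congr rfl (fun b _ => hconst b), Finset.sum_const, card_univ,
    smul_eq_mul] at htot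
  have hpow : (Fintype.card F) ^ k = Fintype.card F * Fintype.card F ^ (k - 1) := by
    conv_lhs => rw [← Nat.succ_pred_eq_of_pos hk]
    rw [pow_succ']
    rfl
  rw [hconst c]
  have := htot.symm.trans hpow
  exact Nat.eq_of_mul_eq_mul_left hq this

end Aux

section Aux2

variable {F : Type} [Field F] [Fintype F] [DecidableEq F] {k : ℕ}

lemma sum_sub_sq {α : Type} (s : Finset α) (g : α → ℝ) (c : ℝ) :
    ∑ a ∈ s, (g a - c) ^ 2
      = (∑ a ∈ s, (g a) ^ 2) - 2 * c * (∑ a ∈ s, g a) + s.card * c ^ 2 := by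
  have : ∀ a ∈ s, (g a - c) ^ 2 = (g a) ^ 2 - 2 * c * g a + c ^ 2 := by
    intro a _; ring
  rw [Finset.sum_congr rfl this, Finset.sum_add_distrib, Finset.sum_sub_distrib,
    ← Finset.mul_sum, Finset.sum_const, nsmul_eq_mul]

lemma sum_f (X : Finset (Fin k → F)) (y : Fin k → F) :
    ∑ v : F, (X.filter fun x => ∑ i, x i * y i = v).card = X.card :=
  (Finset.card_eq_sum_card_fiberwise (fun x _ => mem_univ _)).symm

lemma sq_card_eq (X : Finset (Fin k → F)) (y : Fin k → F) (v : F) :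
    ((X.filter fun x => ∑ i, x i * y i = v).card) ^ 2
      = ((X ×ˢ X).filter fun p =>
          (∑ i, p.1 i * y i) = v ∧ (∑ i, p.2 i * y i) = v).card := by
  rw [Finset.filter_product (fun x : Fin k → F => ∑ i, x i * y i = v)
    (fun x : Fin k → F => ∑ i, x i * y i = v), Finset.card_product, sq]

lemma sum_v_eq (X : Finset (Fin k → F)) (y : Fin k → F) :
    ∑ v : F, ((X ×ˢ X).filter fun p =>
        (∑ i, p.1 i * y i) = v ∧ (∑ i, p.2 i * y i) = v).card
      = ((X ×ˢ X).filter fun p =>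
          (∑ i, p.1 i * y i) = (∑ i, p.2 i * y i)).card := by
  symm
  rw [Finset.card_eq_sum_card_fiberwise
    (f := fun p : (Fin k → F) × (Fin k → F) => ∑ i, p.1 i * y i)
    (t := univ) (fun _ _ => mem_univ _)]
  refine Finset.sum_congr rfl fun v _ => ?_
  rw [Finset.filter_filter]
  congr 1
  apply Finset.filter_congr
  intro p _
  constructor
  · rintro ⟨h1, h2⟩; exact ⟨h2, h1 ▸ h2⟩
  · rintro ⟨h1, h2⟩; exact ⟨h1.trans h2.symm, h1⟩

lemma prod_diag_card (X : Finset (Fin k → F)) :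
    ((X ×ˢ X).filter fun p => p.1 = p.2).card = X.card := by
  apply Finset.card_nbij' (fun p => p.1) (fun x => (x, x))
  · intro p hp
    simp only [mem_coe, mem_filter, mem_product] at hp
    exact hp.1.1
  · intro x hx
    simp only [mem_coe, mem_filter, mem_product]
    exact ⟨⟨hx, hx⟩, trivial⟩
  · intro p hp
    simp only [mem_coe, mem_filter] at hp
    exact Prod.ext rfl hp.2
  · intro x _; rfl

lemma second_moment (m : ℕ) (X : Finset (Fin (m + 1) → F)) :
    ∑ y : Fin (m + 1) → F, ∑ v : F,
        ((X.filter fun x => ∑ i, x i * y i = v).card) ^ 2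
      = X.card * Fintype.card F ^ (m + 1)
        + (X.card ^ 2 - X.card) * Fintype.card F ^ m := by
  have step1 : ∀ y : Fin (m + 1) → F, ∑ v : F,
      ((X.filter fun x => ∑ i, x i * y i = v).card) ^ 2
        = ((X ×ˢ X).filter fun p =>
            (∑ i, p.1 i * y i) = (∑ i, p.2 i * y i)).card := by
    intro y
    rw [Finset.sum_congr rfl fun v _ => sq_card_eq X y v, sum_v_eq]
  rw [Finset.sum_congr rfl fun y _ => step1 y]
  have swap : ∑ y : Fin (m + 1) → F,
      ((X ×ˢ X).filter fun p =>
        (∑ i, p.1 i * y i) = (∑ i, p.2 i * y i)).card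
      = ∑ p ∈ X ×ˢ X,
          (univ.filter fun y : Fin (m + 1) → F =>
            (∑ i, p.1 i * y i) = (∑ i, p.2 i * y i)).card := by
    simp only [Finset.card_filter]
    rw [Finset.sum_comm]
  rw [swap]
  have fib : ∀ p ∈ X ×ˢ X,
      (univ.filter fun y : Fin (m + 1) → F =>
        (∑ i, p.1 i * y i) = (∑ i, p.2 i * y i)).card
      = if p.1 = p.2 then Fintype.card F ^ (m + 1) else Fintype.card F ^ m := by
    intro p _
    by_cases hp : p.1 = p.2
    · rw [if_pos hp, hp]
      simp [Fintype.card_pi]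
    · rw [if_neg hp]
      have hz : p.1 - p.2 ≠ 0 := sub_ne_zero.mpr hp
      have hcond : ∀ y : Fin (m + 1) → F,
          ((∑ i, p.1 i * y i) = (∑ i, p.2 i * y i))
            ↔ (∑ i, (p.1 - p.2) i * y i = 0) := by
        intro y
        have : ∑ i, (p.1 - p.2) i * y i
            = (∑ i, p.1 i * y i) - ∑ i, p.2 i * y i := by
          rw [← Finset.sum_sub_distrib]
          exact Finset.sum_congr rfl fun i _ => by simp [sub_mul]
        rw [this, sub_eq_zero]
      have hfc : (univ.filter fun y : Fin (m + 1) → F =>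
            (∑ i, p.1 i * y i) = (∑ i, p.2 i * y i))
          = (univ.filter fun y : Fin (m + 1) → F =>
              ∑ i, (p.1 - p.2) i * y i = 0) :=
        Finset.filter_congr fun y _ => hcond y
      rw [hfc]
      have hm1 : 1 ≤ m + 1 := Nat.le_add_left 1 m
      have := fiber_card (k := m + 1) hm1 (p.1 - p.2) hz 0
      simpa using this
    
  rw [Finset.sum_congr rfl fib, Finset.sum_ite, Finset.sum_const, Finset.sum_const,
    smul_eq_mul, smul_eq_mul, prod_diag_card]
  have hneg : ((X ×ˢ X).filter fun r => ¬r.1 = r.2).card = X.card ^ 2 - X.card := by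
    have h := Finset.card_filter_add_card_filter_not
      (s := X ×ˢ X) (p := fun r => r.1 = r.2)
    rw [prod_diag_card, Finset.card_product, ← sq] at h
    exact Nat.eq_sub_of_add_eq' h
  rw [hneg]

lemma variance_bound (m : ℕ) (X : Finset (Fin (m + 1) → F)) (v : F) :
    ∑ y : Fin (m + 1) → F,
        (((X.filter fun x => ∑ i, x i * y i = v).card : ℝ)
          - X.card / Fintype.card F) ^ 2
      ≤ (X.card : ℝ) * (Fintype.card F : ℝ) ^ (m + 1) := by
  set q : ℝ := (Fintype.card F : ℝ) with hqdef
  have hq0 : (0 : ℝ) < q := by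
    have : 0 < Fintype.card F := Fintype.card_pos
    rw [hqdef]; exact_mod_cast this
  set A : ℝ := (X.card : ℝ) with hAdef
  have hA0 : (0 : ℝ) ≤ A := Nat.cast_nonneg _
  -- bound single v by the sum over all v
  have hle : ∑ y : Fin (m + 1) → F,
      (((X.filter fun x => ∑ i, x i * y i = v).card : ℝ) - A / q) ^ 2
      ≤ ∑ v' : F, ∑ y : Fin (m + 1) → F,
          (((X.filter fun x => ∑ i, x i * y i = v').card : ℝ) - A / q) ^ 2 := by
    apply Finset.single_le_sum (f := fun v' => ∑ y : Fin (m + 1) → F,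
      (((X.filter fun x => ∑ i, x i * y i = v').card : ℝ) - A / q) ^ 2)
      (fun i _ => Finset.sum_nonneg fun y _ => sq_nonneg _) (mem_univ v)
  refine le_trans hle ?_
  rw [Finset.sum_comm]
  have inner : ∀ y : Fin (m + 1) → F,
      ∑ v' : F, (((X.filter fun x => ∑ i, x i * y i = v').card : ℝ) - A / q) ^ 2
        = (∑ v' : F, (((X.filter fun x => ∑ i, x i * y i = v').card : ℝ)) ^ 2)
          - 2 * (A / q) * A + q * (A / q) ^ 2 := by
    intro y
    rw [sum_sub_sq]
    have h1 : ∑ v' : F, (((X.filter fun x => ∑ i, x i * y i = v').card : ℝ)) = A := by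
      rw [hAdef, ← Nat.cast_sum]
      exact_mod_cast congrArg (Nat.cast (R := ℝ)) (sum_f X y)
    rw [h1, Finset.card_univ, hqdef]
  rw [Finset.sum_congr rfl fun y _ => inner y]
  simp only [Finset.sum_add_distrib, Finset.sum_sub_distrib, Finset.sum_const,
    Finset.card_univ, nsmul_eq_mul]
  have hcard : (Fintype.card (Fin (m + 1) → F) : ℝ) = q ^ (m + 1) := by
    rw [hqdef]; push_cast [Fintype.card_pi]; simp
  have hSM : ∑ y : Fin (m + 1) → F, ∑ v' : F,
      (((X.filter fun x => ∑ i, x i * y i = v').card : ℝ)) ^ 2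
      = A * q ^ (m + 1) + (A ^ 2 - A) * q ^ m := by
    have hXle : X.card ≤ X.card ^ 2 := Nat.le_self_pow two_ne_zero _
    have hcast := congrArg (Nat.cast (R := ℝ)) (second_moment (F := F) m X)
    push_cast [Nat.cast_sub hXle] at hcast
    rw [hAdef, hqdef]
    exact hcast
  rw [hSM, hcard]
  have hqne : q ≠ 0 := ne_of_gt hq0
  have hqm : (0:ℝ) ≤ q ^ m := by positivity
  have heq : A * q ^ (m + 1) + (A ^ 2 - A) * q ^ m - q ^ (m + 1) * (2 * (A / q) * A)
      + q ^ (m + 1) * (q * (A / q) ^ 2) = A * q ^ (m + 1) - A * q ^ m := by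
    field_simp
    ring
  rw [heq]
  nlinarith [mul_nonneg hA0 hqm]

lemma count_split (X Y : Finset (Fin k → F)) (v : F) :
    ((X ×ˢ Y).filter fun p => (∑ i, p.1 i * p.2 i) = v).card
      = ∑ y ∈ Y, (X.filter fun x => ∑ i, x i * y i = v).card := by
  rw [Finset.card_filter, Finset.sum_product, Finset.sum_comm]
  exact Finset.sum_congr rfl fun y _ => (Finset.card_filter _ _).symm

end Aux2

/-- expander coloring based on the inner product.
Here the finite field `F` plays the role of `𝔽_q` with `q = |F|` (automatically a
prime power), and `η = q^{-(k-2)/4}`. -/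
theorem inner_product_expander_coloring :
    ∀ (F : Type) [Field F] [Fintype F] [DecidableEq F],
      ∀ k : ℕ, 3 ≤ k →
      ∀ X Y : Finset (Fin k → F),
        (Fintype.card F : ℝ) ^ (-(((k : ℝ) - 2) / 4)) * (Fintype.card F : ℝ) ^ k ≤
          (X.card : ℝ) →
        (Fintype.card F : ℝ) ^ (-(((k : ℝ) - 2) / 4)) * (Fintype.card F : ℝ) ^ k ≤
          (Y.card : ℝ) →
        ∀ v : F,
          Approx (((X ×ˢ Y).filter fun p => (∑ i, p.1 i * p.2 i) = v).card : ℝ)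
            ((X.card : ℝ) * Y.card / Fintype.card F)
            ((Fintype.card F : ℝ) ^ (-(((k : ℝ) - 2) / 4))) := by
  intro F _ _ _ k hk X Y hX hY v
  obtain ⟨m, rfl⟩ : ∃ m, k = m + 1 := ⟨k - 1, by omega⟩
  set q : ℝ := (Fintype.card F : ℝ) with hqdef
  have hq1 : 1 < Fintype.card F := Fintype.one_lt_card
  have hq0 : (0 : ℝ) < q := by rw [hqdef]; exact_mod_cast Nat.lt_of_lt_of_le Nat.zero_lt_one hq1.le
  set η : ℝ := q ^ (-((((m + 1 : ℕ) : ℝ) - 2) / 4)) with hηdef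
  have hη0 : (0 : ℝ) < η := Real.rpow_pos_of_pos hq0 _
  set A : ℝ := (X.card : ℝ) with hAdef
  set B : ℝ := (Y.card : ℝ) with hBdef
  have hQ0 : (0 : ℝ) < q ^ (m + 1) := by positivity
  have hA0 : (0 : ℝ) < A := lt_of_lt_of_le (by positivity) hX
  have hB0 : (0 : ℝ) < B := lt_of_lt_of_le (by positivity) hY
  set N : ℝ := (((X ×ˢ Y).filter fun p => (∑ i, p.1 i * p.2 i) = v).card : ℝ) with hNdef
  -- split the count over y ∈ Y
  have hcount : N = ∑ y ∈ Y, ((X.filter fun x => ∑ i, x i * y i = v).card : ℝ) := by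
    rw [hNdef]
    exact_mod_cast congrArg (Nat.cast (R := ℝ)) (count_split X Y v)
  have hNE : N - A * B / q
      = ∑ y ∈ Y, (((X.filter fun x => ∑ i, x i * y i = v).card : ℝ) - A / q) := by
    rw [Finset.sum_sub_distrib, Finset.sum_const, nsmul_eq_mul, ← hcount, ← hBdef]
    ring
  -- Cauchy–Schwarz
  have hCS : (N - A * B / q) ^ 2
      ≤ B * ∑ y ∈ Y, (((X.filter fun x => ∑ i, x i * y i = v).card : ℝ) - A / q) ^ 2 := by
    rw [hNE]
    have := Finset.sum_mul_sq_le_sq_mul_sq Y (fun _ => (1 : ℝ))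
      (fun y => ((X.filter fun x => ∑ i, x i * y i = v).card : ℝ) - A / q)
    simpa [hBdef] using this
  have hvar : ∑ y ∈ Y, (((X.filter fun x => ∑ i, x i * y i = v).card : ℝ) - A / q) ^ 2
      ≤ A * q ^ (m + 1) := by
    refine le_trans (Finset.sum_le_sum_of_subset_of_nonneg (Finset.subset_univ Y)
      fun y _ _ => sq_nonneg _) ?_
    exact variance_bound m X v
  have hE2 : (N - A * B / q) ^ 2 ≤ B * (A * q ^ (m + 1)) :=
    le_trans hCS (mul_le_mul_of_nonneg_left hvar hB0.le)
  -- key exponent computation : η⁴ q^{2(m+1)} = q^{m+3}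
  have e4 : η ^ 4 = q ^ (-((((m + 1 : ℕ) : ℝ) - 2))) := by
    rw [hηdef, ← Real.rpow_natCast (q ^ (-((((m + 1 : ℕ) : ℝ) - 2) / 4))) 4,
      ← Real.rpow_mul hq0.le]
    congr 1
    push_cast
    ring
  have key4 : η ^ 4 * (q ^ (m + 1)) ^ 2 = q ^ (m + 1) * q ^ 2 := by
    have h1 : (q ^ (m + 1)) ^ 2 = q ^ (((2 * (m + 1) : ℕ)) : ℝ) := by
      rw [Real.rpow_natCast]; ring
    have h2 : q ^ (m + 1) * q ^ 2 = q ^ (((m + 3 : ℕ)) : ℝ) := by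
      rw [Real.rpow_natCast]; ring
    rw [e4, h1, ← Real.rpow_add hq0, h2]
    congr 1
    push_cast
    ring
  have hABge : (η * q ^ (m + 1)) * (η * q ^ (m + 1)) ≤ A * B :=
    mul_le_mul hX hY (by positivity) (le_trans (by positivity) hX)
  have h5 : q ^ (m + 1) * q ^ 2 * (A * B) ≤ (η ^ 2 * (A * B)) * (A * B) := by
    have step : η ^ 2 * ((η * q ^ (m + 1)) * (η * q ^ (m + 1))) ≤ η ^ 2 * (A * B) :=
      mul_le_mul_of_nonneg_left hABge (sq_nonneg η)
    have eq1 : η ^ 2 * ((η * q ^ (m + 1)) * (η * q ^ (m + 1)))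
        = η ^ 4 * (q ^ (m + 1)) ^ 2 := by ring
    rw [eq1, key4] at step
    exact mul_le_mul_of_nonneg_right step (by positivity)
  have hfin : B * (A * q ^ (m + 1)) ≤ (η * (A * B / q)) ^ 2 := by
    have heq : (η * (A * B / q)) ^ 2 = ((η ^ 2 * (A * B)) * (A * B)) / q ^ 2 := by
      field_simp
    rw [heq, le_div_iff₀ (by positivity : (0 : ℝ) < q ^ 2)]
    calc B * (A * q ^ (m + 1)) * q ^ 2 = q ^ (m + 1) * q ^ 2 * (A * B) := by ring
      _ ≤ (η ^ 2 * (A * B)) * (A * B) := h5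
  have hsq : (N - A * B / q) ^ 2 ≤ (η * (A * B / q)) ^ 2 := le_trans hE2 hfin
  have hpos : (0 : ℝ) ≤ η * (A * B / q) := by positivity
  have habs : -(η * (A * B / q)) ≤ N - A * B / q ∧ N - A * B / q ≤ η * (A * B / q) :=
    abs_le_of_sq_le_sq' hsq hpos
  unfold Approx
  have hb1 : A * B / q * (1 - η) = A * B / q - η * (A * B / q) := by ring
  have hb2 : A * B / q * (1 + η) = A * B / q + η * (A * B / q) := by ring
  rw [hb1, hb2]
  exact ⟨by linarith [habs.1], by linarith [habs.2]⟩
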